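/- Suppose (Poly-R₁) holds. Then for all κ,N>0 and T>0 there exists a constant C=C(T,κ,N)>0 such that exp(−κ t(H∘σ)(t,s)) ≤ C (s φ^{−1}(1/t))^{N} for all 0<t≤T and all 0<s≤1/φ^{−1}(1/t). Moreover, if (Poly-∞) holds, then for all κ,N>0 there exists C=C(κ,N)>0 such that the same inequality holds for all t>0 and all 0<s≤1/φ^{−1}(1/t). -/

import Mathlib

open MeasureTheory Real Set
open scoped ENNReal

/-- Tail of the Lévy measure: `w(r) = ν((r,∞))`. -/
noncomputable def levyTail (ν : Measure ℝ) (r : ℝ) : ℝ := (ν (Set.Ioi r)).toReal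

/-- Laplace exponent `φ(λ) = ∫ (1 - e^{-λ s}) ν(ds)`. -/
noncomputable def laplaceExp (ν : Measure ℝ) (lam : ℝ) : ℝ :=
  ∫ s, (1 - Real.exp (-(lam * s))) ∂ν

/-- Condition (Poly-R₁); (Poly-∞) is the case `R₁ = ⊤`. -/
def PolyCond (ν : Measure ℝ) (R₁ : ℝ≥0∞) (c c' β₁ β₂ : ℝ) : Prop :=
  ∀ r R : ℝ, 0 < r → r ≤ R → ENNReal.ofReal R < R₁ →
    c * (R / r) ^ β₁ ≤ levyTail ν r / levyTail ν R ∧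
      levyTail ν r / levyTail ν R ≤ c' * (R / r) ^ β₂

/-- `ν` is the Lévy measure of a driftless subordinator. -/
structure IsLevyMeasure (ν : Measure ℝ) : Prop where
  supp : ν (Set.Iic 0) = 0
  tail_fin : ∀ r : ℝ, 0 < r → ν (Set.Ioi r) < ⊤
  integ : IntegrableOn (fun s => s) (Set.Ioc (0:ℝ) 1) ν

/-- `μ t` is the law of `S_t` for the driftless subordinator with Lévy measure `ν`. -/
structure IsSubordinatorLaw (ν : Measure ℝ) (μ : ℝ → Measure ℝ) : Prop where
  levy : IsLevyMeasure ν
  prob : ∀ t : ℝ, 0 < t → IsProbabilityMeasure (μ t)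
  nonneg : ∀ t : ℝ, 0 < t → μ t (Set.Iio 0) = 0
  laplace : ∀ t lam : ℝ, 0 < t → 0 ≤ lam →
    (∫ s, Real.exp (-(lam * s)) ∂(μ t)) = Real.exp (-(t * laplaceExp ν lam))

/-- `H(λ) = φ(λ) - λ φ'(λ)`. -/
noncomputable def Hfun (ν : Measure ℝ) (lam : ℝ) : ℝ :=
  laplaceExp ν lam - lam * deriv (laplaceExp ν) lam

/-- `σ(t,s) = (φ')⁻¹(s/t)` if `s/t < φ'(0+)`, and `σ(t,s) = 0` otherwise. -/
def IsSigmaFun (ν : Measure ℝ) (σ : ℝ → ℝ → ℝ) : Prop :=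
  ∀ t s : ℝ, 0 < t → 0 < s →
    ((∃ lam : ℝ, 0 < lam ∧ s / t < deriv (laplaceExp ν) lam) →
      0 < σ t s ∧ deriv (laplaceExp ν) (σ t s) = s / t) ∧
    ((∀ lam : ℝ, 0 < lam → deriv (laplaceExp ν) lam ≤ s / t) → σ t s = 0)

/-- `φInv` is the inverse of the Laplace exponent `φ` on `(0,∞)`. -/
def IsPhiInv (ν : Measure ℝ) (φInv : ℝ → ℝ) : Prop :=
  ∀ u : ℝ, 0 < u → 0 < φInv u ∧ laplaceExp ν (φInv u) = u

/-- `HInv` is the inverse of `H` on `(0,∞)`. -/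
def IsHInv (ν : Measure ℝ) (HInv : ℝ → ℝ) : Prop :=
  ∀ u : ℝ, 0 < u → 0 < HInv u ∧ Hfun ν (HInv u) = u


section AuxLemmasForLeftTail

open Metric

variable {ν : Measure ℝ} {R₁ : ℝ≥0∞} {c c' β₁ β₂ : ℝ}

lemma IsLevyMeasure.ae_pos (hν : IsLevyMeasure ν) : ∀ᵐ y ∂ν, 0 < y := by
  rw [ae_iff]
  have : {y : ℝ | ¬ 0 < y} = Set.Iic 0 := by ext y; simp
  rw [this]; exact hν.supp

lemma one_sub_exp_le (z : ℝ) : 1 - Real.exp (-z) ≤ z := by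
  have := Real.add_one_le_exp (-z)
  linarith

lemma exp_mul_le_inv_e (z : ℝ) (hz : 0 ≤ z) : z * Real.exp (-z) ≤ Real.exp (-1) := by
  have h := Real.add_one_le_exp (z - 1)
  have h2 : z ≤ Real.exp (z - 1) := by linarith
  have h3 : z * Real.exp (-z) ≤ Real.exp (z - 1) * Real.exp (-z) := by
    apply mul_le_mul_of_nonneg_right h2 (Real.exp_nonneg _)
  rw [← Real.exp_add] at h3
  calc z * Real.exp (-z) ≤ Real.exp (z - 1 + -z) := h3
    _ = Real.exp (-1) := by ring_nf

lemma integrableOn_null (hν : IsLevyMeasure ν) (f : ℝ → ℝ) : IntegrableOn f (Set.Iic 0) ν := by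
  rw [IntegrableOn, Measure.restrict_eq_zero.mpr hν.supp]
  exact integrable_zero_measure

lemma integrable_of_pieces (hν : IsLevyMeasure ν) {f : ℝ → ℝ}
    (h1 : IntegrableOn f (Set.Ioc 0 1) ν) (h2 : IntegrableOn f (Set.Ioi 1) ν) :
    Integrable f ν := by
  have : Set.univ = Set.Iic (0:ℝ) ∪ (Set.Ioc 0 1 ∪ Set.Ioi 1) := by
    rw [Set.Ioc_union_Ioi_eq_Ioi (by norm_num : (0:ℝ) ≤ 1), Set.Iic_union_Ioi]
  rw [← integrableOn_univ, this]
  exact (integrableOn_null hν f).union (h1.union h2)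

lemma integrable_one_sub_exp (hν : IsLevyMeasure ν) {lam : ℝ} (hlam : 0 < lam) :
    Integrable (fun y => 1 - Real.exp (-(lam * y))) ν := by
  apply integrable_of_pieces hν
  · -- on Ioc 0 1 : dominated by lam * y
    apply Integrable.mono ((hν.integ).const_mul lam)
    · exact (Continuous.aestronglyMeasurable (by continuity)).restrict
    · rw [ae_restrict_iff' measurableSet_Ioc]
      filter_upwards with y hy
      have hy0 : 0 < y := hy.1
      have h1 : 0 ≤ 1 - Real.exp (-(lam * y)) := by
        have : Real.exp (-(lam * y)) ≤ Real.exp 0 := by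
          apply Real.exp_le_exp.mpr; nlinarith
        simpa using this
      have h2 : 1 - Real.exp (-(lam * y)) ≤ lam * y := one_sub_exp_le _
      rw [Real.norm_eq_abs, Real.norm_eq_abs, abs_of_nonneg h1, abs_of_nonneg (by positivity : (0:ℝ) ≤ lam * y)]
      exact h2
  · -- on Ioi 1 : bounded by 1
    have hfin : ν (Set.Ioi (1:ℝ)) < ⊤ := hν.tail_fin 1 one_pos
    apply Integrable.mono (integrableOn_const hfin.ne : IntegrableOn (fun _ => (1:ℝ)) (Set.Ioi 1) ν)
    · exact (Continuous.aestronglyMeasurable (by continuity)).restrict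
    · rw [ae_restrict_iff' measurableSet_Ioi]
      filter_upwards with y hy
      have hy0 : (1:ℝ) < y := hy
      have h1 : 0 ≤ 1 - Real.exp (-(lam * y)) := by
        have : Real.exp (-(lam * y)) ≤ Real.exp 0 := by
          apply Real.exp_le_exp.mpr; nlinarith
        simpa using this
      have h2 : 1 - Real.exp (-(lam * y)) ≤ 1 := by
        have := Real.exp_pos (-(lam * y)); linarith
      rw [Real.norm_eq_abs, Real.norm_eq_abs, abs_of_nonneg h1]
      simpa using h2

lemma integrable_mul_exp (hν : IsLevyMeasure ν) {lam : ℝ} (hlam : 0 < lam) :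
    Integrable (fun y => y * Real.exp (-(lam * y))) ν := by
  apply integrable_of_pieces hν
  · apply Integrable.mono hν.integ
    · exact (Continuous.aestronglyMeasurable (by continuity)).restrict
    · rw [ae_restrict_iff' measurableSet_Ioc]
      filter_upwards with y hy
      have hy0 : 0 < y := hy.1
      have h2 : Real.exp (-(lam * y)) ≤ 1 := by
        rw [Real.exp_le_one_iff]; nlinarith
      rw [Real.norm_eq_abs, Real.norm_eq_abs, abs_of_nonneg (by positivity : (0:ℝ) ≤ y * Real.exp (-(lam*y))), abs_of_nonneg hy0.le]
      nlinarith [Real.exp_pos (-(lam * y))]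
  · have hfin : ν (Set.Ioi (1:ℝ)) < ⊤ := hν.tail_fin 1 one_pos
    apply Integrable.mono (integrableOn_const hfin.ne : IntegrableOn (fun _ => (Real.exp (-1) / lam : ℝ)) (Set.Ioi 1) ν)
    · exact (Continuous.aestronglyMeasurable (by continuity)).restrict
    · rw [ae_restrict_iff' measurableSet_Ioi]
      filter_upwards with y hy
      have hy0 : (0:ℝ) < y := lt_trans one_pos hy
      have h1 : lam * y * Real.exp (-(lam * y)) ≤ Real.exp (-1) := exp_mul_le_inv_e (lam * y) (by positivity)
      have h2 : y * Real.exp (-(lam * y)) ≤ Real.exp (-1) / lam := by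
        rw [le_div_iff₀ hlam]; nlinarith
      rw [Real.norm_eq_abs, Real.norm_eq_abs, abs_of_nonneg (by positivity : (0:ℝ) ≤ y * Real.exp (-(lam*y))), abs_of_nonneg (by positivity : (0:ℝ) ≤ Real.exp (-1) / lam)]
      exact h2


lemma hasDerivAt_laplaceExp (hν : IsLevyMeasure ν) {lam : ℝ} (hlam : 0 < lam) :
    HasDerivAt (laplaceExp ν) (∫ y, y * Real.exp (-(lam * y)) ∂ν) lam := by
  have hhalf : 0 < lam / 2 := by linarith
  have key := hasDerivAt_integral_of_dominated_loc_of_lip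
    (F := fun x y => 1 - Real.exp (-(x * y)))
    (F' := fun y => y * Real.exp (-(lam * y)))
    (x₀ := lam) (bound := fun y => y * Real.exp (-(lam / 2 * y)))
    (s := Metric.ball lam (lam / 2)) (Metric.ball_mem_nhds lam hhalf) ?_ (integrable_one_sub_exp hν hlam) ?_ ?_
    (integrable_mul_exp hν hhalf) ?_
  · exact key.2
  · filter_upwards with x
    exact (Continuous.aestronglyMeasurable (by continuity))
  · exact (Continuous.aestronglyMeasurable (by continuity))
  · -- Lipschitz bound
    filter_upwards [hν.ae_pos] with y hy
    rw [lipschitzOnWith_iff_dist_le_mul]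
    intro a ha b hb
    rw [Real.dist_eq, Real.dist_eq]
    have hya : lam / 2 < a := by
      have := abs_lt.mp (mem_ball_iff_norm.mp ha); linarith [this.1]
    have hyb : lam / 2 < b := by
      have := abs_lt.mp (mem_ball_iff_norm.mp hb); linarith [this.1]
    have hcoe : ((Real.nnabs (y * Real.exp (-(lam / 2 * y)))) : ℝ)
        = y * Real.exp (-(lam / 2 * y)) := by
      rw [Real.coe_nnabs, abs_of_nonneg (by positivity)]
    rw [hcoe]
    -- wlog b ≤ a
    have main : ∀ u v : ℝ, lam/2 < u → lam/2 < v → v ≤ u →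
        |(1 - Real.exp (-(u * y))) - (1 - Real.exp (-(v * y)))|
          ≤ y * Real.exp (-(lam / 2 * y)) * |u - v| := by
      intro u v hu hv hvu
      have h1 : Real.exp (-(u*y)) ≤ Real.exp (-(v*y)) := by
        apply Real.exp_le_exp.mpr; nlinarith
      have habs : |(1 - Real.exp (-(u * y))) - (1 - Real.exp (-(v * y)))|
          = Real.exp (-(v*y)) - Real.exp (-(u*y)) := by
        rw [abs_of_nonneg (by linarith)]; ring
      rw [habs, abs_of_nonneg (by linarith)]
      -- e^{-vy} - e^{-uy} = e^{-vy}(1 - e^{-(u-v)y}) ≤ e^{-vy} (u-v) y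
      have h2 : 1 - Real.exp (-((u - v) * y)) ≤ (u - v) * y := by
        have := Real.add_one_le_exp (-((u-v)*y)); linarith
      have h3 : Real.exp (-(v*y)) - Real.exp (-(u*y))
          = Real.exp (-(v*y)) * (1 - Real.exp (-((u-v)*y))) := by
        rw [mul_sub, ← Real.exp_add]; ring_nf
      have h4 : Real.exp (-(v*y)) ≤ Real.exp (-(lam/2 * y)) := by
        apply Real.exp_le_exp.mpr; nlinarith
      calc Real.exp (-(v*y)) - Real.exp (-(u*y))
          = Real.exp (-(v*y)) * (1 - Real.exp (-((u-v)*y))) := h3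
        _ ≤ Real.exp (-(v*y)) * ((u - v)*y) := by
            apply mul_le_mul_of_nonneg_left h2 (Real.exp_nonneg _)
        _ ≤ Real.exp (-(lam/2*y)) * ((u-v)*y) := by
            apply mul_le_mul_of_nonneg_right h4 (by nlinarith)
        _ = y * Real.exp (-(lam/2*y)) * (u - v) := by ring
    rcases le_total b a with hba | hab
    · exact main a b hya hyb hba
    · rw [abs_sub_comm (1 - Real.exp (-(a * y))), abs_sub_comm a b]
      exact main b a hyb hya hab
  · -- pointwise derivative
    filter_upwards with y
    have h : HasDerivAt (fun x : ℝ => 1 - Real.exp (-(x * y))) (y * Real.exp (-(lam * y))) lam := by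
      have h1 : HasDerivAt (fun x : ℝ => -(x * y)) (-y) lam := by
        have := hasDerivAt_mul_const (x := lam) (-y)
        rw [show (fun x : ℝ => -(x * y)) = fun x => x * -y from by funext x; ring]
        exact this
      have h2 := (Real.hasDerivAt_exp (-(lam * y))).comp lam h1
      have h3 := h2.const_sub 1
      rw [show y * Real.exp (-(lam * y)) = -(Real.exp (-(lam * y)) * -y) by ring]
      exact h3
    exact h

lemma levyTail_nonneg (r : ℝ) : 0 ≤ levyTail ν r := ENNReal.toReal_nonneg

lemma levyTail_pos (hpoly : PolyCond ν R₁ c c' β₁ β₂) (hc : 0 < c)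
    {R : ℝ} (hR : 0 < R) (hR₁ : ENNReal.ofReal R < R₁) : 0 < levyTail ν R := by
  rcases (hpoly R R hR le_rfl hR₁).1 with h
  rw [div_self hR.ne', Real.one_rpow, mul_one] at h
  rcases eq_or_lt_of_le (levyTail_nonneg (ν := ν) R) with he | hlt
  · exfalso; rw [← he] at h; simp at h; linarith
  · exact hlt

lemma levyTail_scale (hpoly : PolyCond ν R₁ c c' β₁ β₂) (hc : 0 < c)
    {r R : ℝ} (hr : 0 < r) (hrR : r ≤ R) (hR₁ : ENNReal.ofReal R < R₁) :
    c * (R / r) ^ β₁ * levyTail ν R ≤ levyTail ν r := by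
  have hW : 0 < levyTail ν R := levyTail_pos hpoly hc (lt_of_lt_of_le hr hrR) hR₁
  have h := (hpoly r R hr hrR hR₁).1
  rw [le_div_iff₀ hW] at h
  exact h

lemma levyTail_Ioc (hν : IsLevyMeasure ν) {a b : ℝ} (ha : 0 < a) (hab : a ≤ b) :
    (ν (Set.Ioc a b)).toReal = levyTail ν a - levyTail ν b := by
  have hsplit : Set.Ioi a = Set.Ioc a b ∪ Set.Ioi b := (Set.Ioc_union_Ioi_eq_Ioi hab).symm
  have hdisj : Disjoint (Set.Ioc a b) (Set.Ioi b) := by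
    apply Set.disjoint_left.mpr; intro x hx hx'; exact absurd hx.2 (not_le.mpr hx')
  have hmeas : ν (Set.Ioi a) = ν (Set.Ioc a b) + ν (Set.Ioi b) := by
    rw [hsplit, measure_union hdisj measurableSet_Ioi]
  have h1 : ν (Set.Ioc a b) ≠ ⊤ :=
    ne_top_of_le_ne_top (hν.tail_fin a ha).ne (by rw [hsplit]; exact measure_mono Set.subset_union_left)
  have h2 : ν (Set.Ioi b) ≠ ⊤ := (hν.tail_fin b (lt_of_lt_of_le ha hab)).ne
  rw [levyTail, levyTail, hmeas, ENNReal.toReal_add h1 h2]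
  ring

-- splitting the integral
lemma integral_split (hν : IsLevyMeasure ν) {f : ℝ → ℝ} (hf : Integrable f ν) {a : ℝ} (ha : 0 < a) :
    ∫ y, f y ∂ν = (∫ y in Set.Ioc 0 a, f y ∂ν) + ∫ y in Set.Ioi a, f y ∂ν := by
  have hd1 : Disjoint (Set.Iic (0:ℝ)) (Set.Ioi (0:ℝ)) :=
    Set.disjoint_left.mpr (fun x hx hx' => absurd (Set.mem_Ioi.mp hx') (not_lt.mpr hx))
  have hd2 : Disjoint (Set.Ioc (0:ℝ) a) (Set.Ioi a) :=
    Set.disjoint_left.mpr (fun x hx hx' => absurd hx.2 (not_le.mpr hx'))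
  have hu1 : ∫ y in Set.Iic (0:ℝ) ∪ Set.Ioi 0, f y ∂ν
      = (∫ y in Set.Iic (0:ℝ), f y ∂ν) + ∫ y in Set.Ioi (0:ℝ), f y ∂ν :=
    setIntegral_union hd1 measurableSet_Ioi hf.integrableOn hf.integrableOn
  have hu2 : ∫ y in Set.Ioc (0:ℝ) a ∪ Set.Ioi a, f y ∂ν
      = (∫ y in Set.Ioc (0:ℝ) a, f y ∂ν) + ∫ y in Set.Ioi a, f y ∂ν :=
    setIntegral_union hd2 measurableSet_Ioi hf.integrableOn hf.integrableOn
  have h0 : ∫ y, f y ∂ν = ∫ y in Set.Ioi 0, f y ∂ν := by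
    rw [← setIntegral_univ (f := f) (μ := ν), ← Set.Iic_union_Ioi (a := (0:ℝ)), hu1]
    have : ∫ y in Set.Iic 0, f y ∂ν = 0 := by
      rw [Measure.restrict_eq_zero.mpr hν.supp]; exact integral_zero_measure f
    rw [this, zero_add]
  rw [h0, ← Set.Ioc_union_Ioi_eq_Ioi ha.le, hu2]

-- the key inequality
lemma key_ineq (hν : IsLevyMeasure ν) (hpoly : PolyCond ν R₁ c c' β₁ β₂)
    (hc : 0 < c) (hβ₁ : 0 < β₁) {M : ℝ} (hM2 : 2 ≤ M) (hMc : 2 ≤ c * M ^ β₁)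
    {lam : ℝ} (hlam : 0 < lam) (hR : ENNReal.ofReal (1/lam) < R₁) :
    laplaceExp ν lam ≤ (2 * Real.exp 1 * M) * (lam * ∫ y, y * Real.exp (-(lam * y)) ∂ν) := by
  set a : ℝ := 1 / lam with ha_def
  have ha : 0 < a := by positivity
  set a' : ℝ := 1 / (M * lam) with ha'_def
  have hMpos : (0:ℝ) < M := by linarith
  have ha' : 0 < a' := by positivity
  have ha'a : a' ≤ a := by
    rw [ha'_def, ha_def, div_le_div_iff₀ (by positivity) hlam]
    nlinarith
  set G : ℝ := ∫ y in Set.Ioc 0 a, y ∂ν with hG_def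
  set W : ℝ := levyTail ν a with hW_def
  set I : ℝ := ∫ y, y * Real.exp (-(lam * y)) ∂ν with hI_def
  have hIint : Integrable (fun y => y * Real.exp (-(lam * y))) ν := integrable_mul_exp hν hlam
  have hGint : IntegrableOn (fun y : ℝ => y) (Set.Ioc 0 a) ν := by
    rcases le_total a 1 with h | h
    · exact hν.integ.mono_set (Set.Ioc_subset_Ioc_right h)
    · have : Set.Ioc (0:ℝ) a = Set.Ioc 0 1 ∪ Set.Ioc 1 a :=
        (Set.Ioc_union_Ioc_eq_Ioc (by norm_num) h).symm
      rw [this]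
      apply IntegrableOn.union hν.integ
      have hfin : ν (Set.Ioc (1:ℝ) a) < ⊤ :=
        lt_of_le_of_lt (measure_mono Set.Ioc_subset_Ioi_self) (hν.tail_fin 1 one_pos)
      apply Integrable.mono (integrableOn_const hfin.ne : IntegrableOn (fun _ => a) _ ν)
      · exact (Continuous.aestronglyMeasurable (by continuity)).restrict
      · rw [ae_restrict_iff' measurableSet_Ioc]
        filter_upwards with y hy
        rw [Real.norm_eq_abs, Real.norm_eq_abs, abs_of_nonneg (by linarith [hy.1] : (0:ℝ) ≤ y),
          abs_of_nonneg ha.le]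
        exact hy.2
  -- step (a): φ(lam) ≤ lam * G + W
  have stepA : laplaceExp ν lam ≤ lam * G + W := by
    rw [laplaceExp, integral_split hν (integrable_one_sub_exp hν hlam) ha]
    have h1 : ∫ y in Set.Ioc 0 a, (1 - Real.exp (-(lam * y))) ∂ν ≤ lam * G := by
      rw [hG_def, ← integral_const_mul]
      apply setIntegral_mono_on ((integrable_one_sub_exp hν hlam).integrableOn) (hGint.const_mul lam)
        measurableSet_Ioc
      intro y hy
      exact one_sub_exp_le (lam * y)
    have h2 : ∫ y in Set.Ioi a, (1 - Real.exp (-(lam * y))) ∂ν ≤ W := by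
      have : ∫ y in Set.Ioi a, (1 - Real.exp (-(lam * y))) ∂ν ≤ ∫ _ in Set.Ioi a, (1:ℝ) ∂ν := by
        apply setIntegral_mono_on ((integrable_one_sub_exp hν hlam).integrableOn)
          (integrableOn_const (hν.tail_fin a ha).ne) measurableSet_Ioi
        intro y hy
        have := Real.exp_pos (-(lam * y)); linarith
      calc _ ≤ ∫ _ in Set.Ioi a, (1:ℝ) ∂ν := this
        _ = W := by rw [setIntegral_const, smul_eq_mul, mul_one, hW_def, levyTail, measureReal_def]
    linarith
  -- nonnegativity of pieces of I
  have hpos_piece : ∀ s : Set ℝ, MeasurableSet s → (0:ℝ) ≤ ∫ y in s, y * Real.exp (-(lam * y)) ∂ν := by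
    intro s hs
    apply setIntegral_nonneg_ae hs
    filter_upwards [hν.ae_pos] with y hy _
    positivity
  -- step (b): e⁻¹ G ≤ I restricted to Ioc 0 a piece
  have hsplitI := integral_split hν hIint ha
  have stepB : Real.exp (-1) * G ≤ ∫ y in Set.Ioc 0 a, y * Real.exp (-(lam * y)) ∂ν := by
    rw [hG_def, ← integral_const_mul]
    apply setIntegral_mono_on (hGint.const_mul _) (hIint.integrableOn) measurableSet_Ioc
    intro y hy
    rw [mul_comm (Real.exp (-1)) y]
    apply mul_le_mul_of_nonneg_left _ hy.1.le
    apply Real.exp_le_exp.mpr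
    have : lam * y ≤ 1 := by
      have := hy.2; rw [ha_def] at this
      calc lam * y ≤ lam * (1/lam) := by apply mul_le_mul_of_nonneg_left this hlam.le
        _ = 1 := by field_simp
    linarith
  -- step (c): e⁻¹ a' (W' - W) ≤ I restricted piece, where W' = levyTail a'
  set W' : ℝ := levyTail ν a' with hW'_def
  have stepC : Real.exp (-1) * a' * (W' - W) ≤ ∫ y in Set.Ioc a' a, y * Real.exp (-(lam * y)) ∂ν := by
    have hIocint : IntegrableOn (fun y => y * Real.exp (-(lam * y))) (Set.Ioc a' a) ν :=
      hIint.integrableOn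
    have hconst : IntegrableOn (fun _ : ℝ => Real.exp (-1) * a') (Set.Ioc a' a) ν := by
      apply integrableOn_const (ne_of_lt ?_)
      exact lt_of_le_of_lt (measure_mono Set.Ioc_subset_Ioi_self) (hν.tail_fin a' ha')
    have hmono : ∫ _ in Set.Ioc a' a, (Real.exp (-1) * a') ∂ν
        ≤ ∫ y in Set.Ioc a' a, y * Real.exp (-(lam * y)) ∂ν := by
      apply setIntegral_mono_on hconst hIocint measurableSet_Ioc
      intro y hy
      have h1 : a' < y := hy.1
      have h2 : y ≤ a := hy.2
      have h3 : Real.exp (-1) ≤ Real.exp (-(lam * y)) := by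
        apply Real.exp_le_exp.mpr
        have : lam * y ≤ 1 := by
          calc lam * y ≤ lam * (1/lam) := by apply mul_le_mul_of_nonneg_left (by rwa [← ha_def]) hlam.le
            _ = 1 := by field_simp
        linarith
      calc Real.exp (-1) * a' ≤ Real.exp (-(lam * y)) * y := by
            apply mul_le_mul h3 h1.le ha'.le (Real.exp_nonneg _)
        _ = y * Real.exp (-(lam * y)) := by ring
    calc Real.exp (-1) * a' * (W' - W)
        = ∫ _ in Set.Ioc a' a, (Real.exp (-1) * a') ∂ν := by
          rw [setIntegral_const, smul_eq_mul, measureReal_def, levyTail_Ioc hν ha' ha'a, hW'_def, hW_def]; ring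
      _ ≤ _ := hmono
  -- step (d): W ≤ W' - W  i.e. 2 W ≤ W'
  have stepD : W ≤ W' - W := by
    have := levyTail_scale hpoly hc ha' ha'a hR
    have hratio : a / a' = M := by rw [ha_def, ha'_def]; field_simp
    rw [hratio] at this
    have h2W : 2 * W ≤ W' := by
      calc 2 * W ≤ (c * M ^ β₁) * W := by
            apply mul_le_mul_of_nonneg_right hMc (levyTail_nonneg a)
        _ ≤ W' := this
    linarith
  -- combine
  have hIocIoc : ∫ y in Set.Ioc a' a, y * Real.exp (-(lam * y)) ∂ν
      ≤ ∫ y in Set.Ioc 0 a, y * Real.exp (-(lam * y)) ∂ν := by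
    apply setIntegral_mono_set (hIint.integrableOn)
    · filter_upwards [ae_restrict_of_ae hν.ae_pos] with y hy; positivity
    · exact HasSubset.Subset.eventuallyLE (Set.Ioc_subset_Ioc_left ha'.le)
  have hIocI : ∫ y in Set.Ioc 0 a, y * Real.exp (-(lam * y)) ∂ν ≤ I := by
    rw [hI_def, hsplitI]
    have := hpos_piece (Set.Ioi a) measurableSet_Ioi
    linarith
  have hIpos : 0 ≤ I := by
    rw [hI_def, hsplitI]
    have h1 := hpos_piece (Set.Ioc 0 a) measurableSet_Ioc
    have h2 := hpos_piece (Set.Ioi a) measurableSet_Ioi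
    linarith
  have hee : Real.exp 1 * Real.exp (-1) = 1 := by
    rw [← Real.exp_add]; norm_num
  have hGI : G ≤ Real.exp 1 * I := by
    have h1 : Real.exp (-1) * G ≤ I := le_trans stepB hIocI
    calc G = Real.exp 1 * Real.exp (-1) * G := by rw [hee, one_mul]
      _ = Real.exp 1 * (Real.exp (-1) * G) := by ring
      _ ≤ Real.exp 1 * I := by apply mul_le_mul_of_nonneg_left h1 (Real.exp_nonneg 1)
  have hWI : W ≤ Real.exp 1 * M * lam * I := by
    have h1 : Real.exp (-1) * a' * W ≤ I := by
      have h2 : Real.exp (-1) * a' * W ≤ Real.exp (-1) * a' * (W' - W) := by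
        apply mul_le_mul_of_nonneg_left stepD (by positivity)
      exact le_trans h2 (le_trans stepC (le_trans hIocIoc hIocI))
    have ha'inv : (1:ℝ) / a' = M * lam := by rw [ha'_def]; field_simp
    have h3 := mul_le_mul_of_nonneg_left h1 (by positivity : (0:ℝ) ≤ Real.exp 1 / a')
    have h4 : Real.exp 1 / a' * (Real.exp (-1) * a' * W) = W := by
      have h5 : a' / a' = 1 := div_self ha'.ne'
      calc Real.exp 1 / a' * (Real.exp (-1) * a' * W)
          = Real.exp 1 * Real.exp (-1) * W * (a' / a') := by ring
        _ = W := by rw [h5, hee, one_mul, mul_one]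
    have h6 : Real.exp 1 / a' * I = Real.exp 1 * M * lam * I := by
      rw [div_eq_mul_one_div, ha'inv]; ring
    rw [h4, h6] at h3
    exact h3
  calc laplaceExp ν lam ≤ lam * G + W := stepA
    _ ≤ lam * (Real.exp 1 * I) + Real.exp 1 * M * lam * I := by
        have := mul_le_mul_of_nonneg_left hGI hlam.le
        linarith
    _ = Real.exp 1 * (1 + M) * (lam * I) := by ring
    _ ≤ 2 * Real.exp 1 * M * (lam * I) := by
        have hlamI : 0 ≤ lam * I := by positivity
        apply mul_le_mul_of_nonneg_right _ hlamI
        have he := Real.exp_nonneg 1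
        nlinarith
    _ = (2 * Real.exp 1 * M) * (lam * I) := by ring

lemma laplaceExp_zero : laplaceExp ν 0 = 0 := by
  unfold laplaceExp
  have : ∀ s : ℝ, 1 - Real.exp (-(0 * s)) = 0 := by intro s; simp
  simp [this]

lemma laplaceExp_mono (hν : IsLevyMeasure ν) {u v : ℝ} (hu : 0 < u) (huv : u ≤ v) :
    laplaceExp ν u ≤ laplaceExp ν v := by
  have hv : 0 < v := lt_of_lt_of_le hu huv
  apply integral_mono_ae (integrable_one_sub_exp hν hu) (integrable_one_sub_exp hν hv)
  filter_upwards [hν.ae_pos] with y hy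
  have : Real.exp (-(v * y)) ≤ Real.exp (-(u * y)) := by
    apply Real.exp_le_exp.mpr; nlinarith
  linarith

lemma laplaceExp_tangent (hν : IsLevyMeasure ν) {σ₀ lam : ℝ} (hσ₀ : 0 < σ₀) (hlam : 0 < lam) :
    laplaceExp ν lam ≤ laplaceExp ν σ₀ + (∫ y, y * Real.exp (-(σ₀ * y)) ∂ν) * (lam - σ₀) := by
  have hInt1 := integrable_one_sub_exp hν hlam
  have hInt2 := integrable_one_sub_exp hν hσ₀
  have hInt3 := integrable_mul_exp hν hσ₀
  have key : laplaceExp ν lam ≤ ∫ y, ((1 - Real.exp (-(σ₀ * y))) + (lam - σ₀) * (y * Real.exp (-(σ₀ * y)))) ∂ν := by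
    apply integral_mono_ae hInt1 (hInt2.add (hInt3.const_mul _))
    filter_upwards [hν.ae_pos] with y hy
    -- 1 - e^{-lam y} - (1 - e^{-σ₀ y}) = e^{-σ₀ y} (1 - e^{-(lam-σ₀) y}) ≤ e^{-σ₀ y} (lam-σ₀) y
    have h1 : 1 - Real.exp (-((lam - σ₀) * y)) ≤ (lam - σ₀) * y := one_sub_exp_le _
    have h2 : Real.exp (-(σ₀ * y)) * (1 - Real.exp (-((lam - σ₀) * y)))
        ≤ Real.exp (-(σ₀ * y)) * ((lam - σ₀) * y) := by
      apply mul_le_mul_of_nonneg_left h1 (Real.exp_nonneg _)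
    have h3 : Real.exp (-(σ₀ * y)) * (1 - Real.exp (-((lam - σ₀) * y)))
        = Real.exp (-(σ₀ * y)) - Real.exp (-(lam * y)) := by
      rw [mul_sub, mul_one, ← Real.exp_add]; ring_nf
    rw [h3] at h2
    have : (1 : ℝ) - Real.exp (-(lam * y)) = (1 - Real.exp (-(σ₀ * y))) + (Real.exp (-(σ₀*y)) - Real.exp (-(lam * y))) := by ring
    rw [this]
    simp only [Pi.add_apply]
    have h4 : Real.exp (-(σ₀ * y)) * ((lam - σ₀) * y) = (lam - σ₀) * (y * Real.exp (-(σ₀ * y))) := by ring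
    linarith [h4 ▸ h2]
  rw [integral_add hInt2 (hInt3.const_mul _), integral_const_mul] at key
  calc laplaceExp ν lam ≤ _ := key
    _ = laplaceExp ν σ₀ + (∫ y, y * Real.exp (-(σ₀ * y)) ∂ν) * (lam - σ₀) := by
      rw [laplaceExp]; ring

lemma laplaceExp_scaling (hν : IsLevyMeasure ν) {b δ : ℝ} (hb : 0 < b) (hδ : 0 < δ)
    (hkey : ∀ lam, b ≤ lam → δ * laplaceExp ν lam ≤ lam * ∫ y, y * Real.exp (-(lam * y)) ∂ν)
    {R μ : ℝ} (hμ : b ≤ μ) (hR : 1 ≤ R) :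
    R ^ δ * laplaceExp ν μ ≤ laplaceExp ν (R * μ) := by
  have hμ0 : 0 < μ := lt_of_lt_of_le hb hμ
  set f : ℝ → ℝ := fun l => laplaceExp ν l * l ^ (-δ) with hf_def
  have hderiv : ∀ l, 0 < l → HasDerivAt f
      ((∫ y, y * Real.exp (-(l * y)) ∂ν) * l ^ (-δ) + laplaceExp ν l * (-δ * l ^ (-δ - 1))) l := by
    intro l hl
    exact (hasDerivAt_laplaceExp hν hl).mul (Real.hasDerivAt_rpow_const (Or.inl hl.ne'))
  have hmono : MonotoneOn f (Set.Ici b) := by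
    apply monotoneOn_of_deriv_nonneg (convex_Ici b)
    · intro l hl
      exact (hderiv l (lt_of_lt_of_le hb hl)).continuousAt.continuousWithinAt
    · intro l hl
      rw [interior_Ici] at hl
      exact (hderiv l (lt_trans hb hl)).differentiableAt.differentiableWithinAt
    · intro l hl
      rw [interior_Ici] at hl
      have hl0 : 0 < l := lt_trans hb hl
      rw [(hderiv l hl0).deriv]
      have hrw : (l:ℝ) ^ (-δ) = l * l ^ (-δ - 1) := by
        have h := Real.rpow_add hl0 1 (-δ - 1)
        rw [Real.rpow_one] at h
        have he : 1 + (-δ - 1) = -δ := by ring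
        rw [he] at h
        exact h
      have hkeyl := hkey l (le_of_lt hl)
      have hpow : (0:ℝ) ≤ l ^ (-δ - 1) := Real.rpow_nonneg hl0.le _
      have expand : (∫ y, y * Real.exp (-(l * y)) ∂ν) * l ^ (-δ) + laplaceExp ν l * (-δ * l ^ (-δ - 1))
          = (l * (∫ y, y * Real.exp (-(l * y)) ∂ν) - δ * laplaceExp ν l) * l ^ (-δ - 1) := by
        rw [hrw]; ring
      rw [expand]
      apply mul_nonneg _ hpow
      linarith
  have happ := hmono (Set.mem_Ici.mpr hμ) (Set.mem_Ici.mpr (by nlinarith : b ≤ R * μ)) (by nlinarith : μ ≤ R * μ)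
  -- f μ ≤ f (R μ): rearrange
  have hRμ : 0 < R * μ := by nlinarith
  have h1 := mul_le_mul_of_nonneg_right happ (Real.rpow_nonneg hRμ.le δ)
  have hL : laplaceExp ν μ * μ ^ (-δ) * (R * μ) ^ δ = R ^ δ * laplaceExp ν μ := by
    rw [Real.mul_rpow (by linarith : (0:ℝ) ≤ R) hμ0.le, Real.rpow_neg hμ0.le]
    have : (μ:ℝ) ^ δ ≠ 0 := by
      apply ne_of_gt; exact Real.rpow_pos_of_pos hμ0 δ
    field_simp
  have hRr : laplaceExp ν (R * μ) * (R * μ) ^ (-δ) * (R * μ) ^ δ = laplaceExp ν (R * μ) := by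
    rw [Real.rpow_neg hRμ.le]
    have : (R * μ:ℝ) ^ δ ≠ 0 := by
      apply ne_of_gt; exact Real.rpow_pos_of_pos hRμ δ
    field_simp
  rw [hf_def] at h1
  simp only at h1
  rw [hL, hRr] at h1
  exact h1

lemma exp_rpow_bound {a β N : ℝ} (ha : 0 < a) (hβ : 0 < β) (hN : 0 < N) :
    ∃ C : ℝ, 0 < C ∧ ∀ x : ℝ, 0 < x → x ≤ 1 → Real.exp (-(a * x ^ (-β))) ≤ C * x ^ N := by
  set q : ℝ := N / β with hq_def
  have hq : 0 < q := by positivity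
  set s : ℝ := a / q with hs_def
  have hs : 0 < s := by positivity
  refine ⟨Real.exp (-(q * (1 + Real.log s))) , Real.exp_pos _, ?_⟩
  intro x hx hx1
  set z : ℝ := x ^ (-β) with hz_def
  have hz0 : 0 < z := Real.rpow_pos_of_pos hx _
  have hz1 : 1 ≤ z := by
    rw [hz_def]
    exact Real.one_le_rpow_of_pos_of_le_one_of_nonpos hx hx1 (by linarith)
  -- q log z ≤ a z - q - q log s
  have hlog : Real.log (s * z) ≤ s * z - 1 := by
    have := Real.log_le_sub_one_of_pos (by positivity : 0 < s * z)
    linarith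
  have hlog2 : Real.log z ≤ s * z - 1 - Real.log s := by
    rw [Real.log_mul hs.ne' hz0.ne'] at hlog
    linarith
  have hqlog : q * Real.log z ≤ a * z - q * (1 + Real.log s) := by
    have h := mul_le_mul_of_nonneg_left hlog2 hq.le
    have hqs : q * s = a := by rw [hs_def]; field_simp
    nlinarith
  -- z^q ≤ exp(a z) * exp(-(q(1+log s)))
  have hzq : z ^ q ≤ Real.exp (a * z) * Real.exp (-(q * (1 + Real.log s))) := by
    rw [← Real.exp_add, ← Real.exp_log (Real.rpow_pos_of_pos hz0 q), Real.log_rpow hz0]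
    apply Real.exp_le_exp.mpr
    linarith
  -- conclude
  have hfinal : Real.exp (-(a * z)) ≤ Real.exp (-(q * (1 + Real.log s))) * z ^ (-q) := by
    have hzq_pos : 0 < z ^ q := Real.rpow_pos_of_pos hz0 q
    rw [Real.rpow_neg hz0.le, ← div_eq_mul_inv, le_div_iff₀ hzq_pos]
    calc Real.exp (-(a * z)) * z ^ q
        ≤ Real.exp (-(a * z)) * (Real.exp (a * z) * Real.exp (-(q * (1 + Real.log s)))) := by
          apply mul_le_mul_of_nonneg_left hzq (Real.exp_nonneg _)
      _ = (Real.exp (-(a * z)) * Real.exp (a * z)) * Real.exp (-(q * (1 + Real.log s))) := by ring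
      _ = Real.exp (-(q * (1 + Real.log s))) := by
          rw [← Real.exp_add, neg_add_cancel, Real.exp_zero, one_mul]
  have hzN : z ^ (-q) = x ^ N := by
    rw [hz_def, ← Real.rpow_mul hx.le]
    congr 1
    rw [hq_def]
    field_simp
  rw [← hzN]
  exact hfinal

lemma core_pointwise (hν : IsLevyMeasure ν) {σf : ℝ → ℝ → ℝ} (hσf : IsSigmaFun ν σf)
    {φInv : ℝ → ℝ} (hφInv : IsPhiInv ν φInv)
    {κ N B δ C₆ : ℝ} (hκ : 0 < κ) (hN : 0 < N) (hB : 1 ≤ B) (hδ : 0 < δ) (hC₆ : 0 < C₆)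
    (hexp : ∀ x : ℝ, 0 < x → x ≤ 1 → Real.exp (-(κ * x ^ (-δ))) ≤ C₆ * x ^ N)
    {t s μ₀ : ℝ} (ht : 0 < t) (hs : 0 < s) (hsle : s ≤ (φInv t⁻¹)⁻¹)
    (hμ₀1 : φInv t⁻¹ ≤ μ₀) (hμ₀2 : μ₀ ≤ B * φInv t⁻¹)
    (hkey : ∀ lam, μ₀ ≤ lam → δ * laplaceExp ν lam ≤ lam * ∫ y, y * Real.exp (-(lam * y)) ∂ν) :
    Real.exp (-(κ * (t * Hfun ν (σf t s))))
      ≤ (Real.exp (κ * B) * C₆ + (B / δ) ^ N) * (s * φInv t⁻¹) ^ N := by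
  obtain ⟨hLpos, hLeq⟩ := hφInv t⁻¹ (by positivity)
  set L : ℝ := φInv t⁻¹ with hL_def
  have hμ₀pos : 0 < μ₀ := lt_of_lt_of_le hLpos hμ₀1
  set x : ℝ := s * L with hx_def
  have hx0 : 0 < x := by positivity
  have hx1 : x ≤ 1 := by
    rw [hx_def]
    calc s * L ≤ L⁻¹ * L := by apply mul_le_mul_of_nonneg_right hsle hLpos.le
      _ = 1 := inv_mul_cancel₀ hLpos.ne'
  have hxN : 0 < x ^ N := Real.rpow_pos_of_pos hx0 N
  have hBδN : 0 < (B / δ) ^ N := Real.rpow_pos_of_pos (by positivity) N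
  by_cases hcase : ∃ lam : ℝ, 0 < lam ∧ s / t < deriv (laplaceExp ν) lam
  · -- main case
    obtain ⟨hσpos, hσeq⟩ := (hσf t s ht hs).1 hcase
    set σ₀ : ℝ := σf t s with hσ₀_def
    have hI : (∫ y, y * Real.exp (-(σ₀ * y)) ∂ν) = s / t :=
      ((hasDerivAt_laplaceExp hν hσpos).deriv).symm.trans hσeq
    have hH : Hfun ν σ₀ = laplaceExp ν σ₀ - σ₀ * (s / t) := by rw [Hfun, hσeq]
    set lam' : ℝ := μ₀ / x with hlam'_def
    have hlam' : 0 < lam' := by positivity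
    have htan := laplaceExp_tangent hν hσpos hlam'
    rw [hI] at htan
    -- t * Hfun ≥ t φ(lam') - s lam'
    have h1 : t * laplaceExp ν lam' - s * lam' ≤ t * Hfun ν σ₀ := by
      rw [hH]
      have h2 := mul_le_mul_of_nonneg_left htan ht.le
      have h3 : t * (s / t) = s := by field_simp
      calc t * laplaceExp ν lam' - s * lam'
          ≤ t * (laplaceExp ν σ₀ + s / t * (lam' - σ₀)) - s * lam' := by linarith
        _ = t * (laplaceExp ν σ₀ - σ₀ * (s / t)) + (t * (s/t)) * lam' - s * lam' := by ring
        _ = t * (laplaceExp ν σ₀ - σ₀ * (s / t)) := by rw [h3]; ring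
    -- scaling
    have hxinv : 1 ≤ 1 / x := by rw [le_div_iff₀ hx0]; linarith
    have hscale := laplaceExp_scaling hν hμ₀pos hδ hkey (le_refl μ₀) hxinv
    have hlam'eq : (1 / x) * μ₀ = lam' := by rw [hlam'_def]; ring
    rw [hlam'eq] at hscale
    have hφμ₀ : (1:ℝ) ≤ t * laplaceExp ν μ₀ := by
      have := laplaceExp_mono hν hLpos hμ₀1
      rw [hLeq] at this
      calc (1:ℝ) = t * t⁻¹ := by field_simp
        _ ≤ t * laplaceExp ν μ₀ := by apply mul_le_mul_of_nonneg_left this ht.le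
    have h4 : x ^ (-δ) ≤ t * laplaceExp ν lam' := by
      have h5 : (1/x) ^ δ * 1 ≤ (1/x) ^ δ * (t * laplaceExp ν μ₀) := by
        apply mul_le_mul_of_nonneg_left hφμ₀ (Real.rpow_nonneg (by positivity) δ)
      have h6 : (1/x) ^ δ = x ^ (-δ) := by
        rw [one_div, Real.inv_rpow hx0.le, ← Real.rpow_neg hx0.le]
      have h7 := mul_le_mul_of_nonneg_left hscale ht.le
      calc x ^ (-δ) = (1/x) ^ δ * 1 := by rw [h6, mul_one]
        _ ≤ (1/x) ^ δ * (t * laplaceExp ν μ₀) := h5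
        _ = t * ((1/x) ^ δ * laplaceExp ν μ₀) := by ring
        _ ≤ t * laplaceExp ν lam' := h7
    have h8 : s * lam' ≤ B := by
      have : s * lam' = μ₀ / L := by
        rw [hlam'_def, hx_def]
        field_simp
      rw [this, div_le_iff₀ hLpos]
      linarith [hμ₀2]
    have hfin : x ^ (-δ) - B ≤ t * Hfun ν σ₀ := by linarith
    calc Real.exp (-(κ * (t * Hfun ν σ₀)))
        ≤ Real.exp (-(κ * (x ^ (-δ) - B))) := by
          apply Real.exp_le_exp.mpr
          have := mul_le_mul_of_nonneg_left hfin hκ.le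
          linarith
      _ = Real.exp (κ * B) * Real.exp (-(κ * x ^ (-δ))) := by
          rw [← Real.exp_add]; ring_nf
      _ ≤ Real.exp (κ * B) * (C₆ * x ^ N) := by
          apply mul_le_mul_of_nonneg_left (hexp x hx0 hx1) (Real.exp_nonneg _)
      _ = (Real.exp (κ * B) * C₆) * x ^ N := by ring
      _ ≤ (Real.exp (κ * B) * C₆ + (B / δ) ^ N) * x ^ N := by
          apply mul_le_mul_of_nonneg_right _ hxN.le
          linarith
  · -- degenerate case: σ = 0
    push_neg at hcase
    have hσ0 : σf t s = 0 := (hσf t s ht hs).2 hcase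
    have hH0 : Hfun ν (σf t s) = 0 := by
      rw [hσ0, Hfun, laplaceExp_zero]; ring
    rw [hH0]
    simp only [mul_zero, neg_zero, Real.exp_zero]
    -- x ≥ δ / B
    have hIμ₀ : (∫ y, y * Real.exp (-(μ₀ * y)) ∂ν) ≤ s / t := by
      rw [← (hasDerivAt_laplaceExp hν hμ₀pos).deriv]
      exact hcase μ₀ hμ₀pos
    have hk := hkey μ₀ (le_refl μ₀)
    have hφμ₀ : t⁻¹ ≤ laplaceExp ν μ₀ := by
      have := laplaceExp_mono hν hLpos hμ₀1
      rwa [hLeq] at this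
    have hxlow : δ / B ≤ x := by
      have h1 : δ * t⁻¹ ≤ μ₀ * (s / t) := by
        calc δ * t⁻¹ ≤ δ * laplaceExp ν μ₀ := by
              apply mul_le_mul_of_nonneg_left hφμ₀ hδ.le
          _ ≤ μ₀ * ∫ y, y * Real.exp (-(μ₀ * y)) ∂ν := hk
          _ ≤ μ₀ * (s / t) := by apply mul_le_mul_of_nonneg_left hIμ₀ hμ₀pos.le
      have h2 : δ ≤ μ₀ * s := by
        have := mul_le_mul_of_nonneg_left h1 ht.le
        have e1 : t * (δ * t⁻¹) = δ := by field_simp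
        have e2 : t * (μ₀ * (s / t)) = μ₀ * s := by field_simp
        rw [e1, e2] at this
        exact this
      rw [div_le_iff₀ (by linarith : (0:ℝ) < B), hx_def]
      -- δ ≤ s * L * B : from δ ≤ μ₀ s ≤ B L s
      calc δ ≤ μ₀ * s := h2
        _ ≤ (B * L) * s := by apply mul_le_mul_of_nonneg_right hμ₀2 hs.le
        _ = s * L * B := by ring
    have hxN' : (δ / B) ^ N ≤ x ^ N := Real.rpow_le_rpow (by positivity) hxlow hN.le
    have hprod : (B / δ) ^ N * (δ / B) ^ N = 1 := by
      rw [← Real.mul_rpow (by positivity) (by positivity)]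
      have : (B / δ) * (δ / B) = 1 := by field_simp
      rw [this, Real.one_rpow]
    calc (1:ℝ) = (B / δ) ^ N * (δ / B) ^ N := hprod.symm
      _ ≤ (B / δ) ^ N * x ^ N := by
          apply mul_le_mul_of_nonneg_left hxN' hBδN.le
      _ ≤ (Real.exp (κ * B) * C₆ + (B / δ) ^ N) * x ^ N := by
          apply mul_le_mul_of_nonneg_right _ hxN.le
          have : 0 < Real.exp (κ * B) * C₆ := by positivity
          linarith

end AuxLemmasForLeftTail

/-- Lemma 2.5: under (Poly-R₁), for all `κ, N, T > 0` there is `C > 0` with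
`exp(-κ t H(σ(t,s))) ≤ C (s φ⁻¹(1/t))^N` for `0 < t ≤ T` and `0 < s ≤ 1/φ⁻¹(1/t)`;
under (Poly-∞) the constant can be chosen uniformly in `t > 0`. -/
theorem left_tail_power_bound
    (ν : Measure ℝ) (hν : IsLevyMeasure ν)
    (σ : ℝ → ℝ → ℝ) (hσ : IsSigmaFun ν σ)
    (φInv : ℝ → ℝ) (hφInv : IsPhiInv ν φInv)
    (R₁ : ℝ≥0∞) (c c' β₁ β₂ : ℝ)
    (hR₁ : 0 < R₁) (hc : 0 < c) (hc' : 0 < c') (hβ₁ : 0 < β₁) (hβ : β₁ ≤ β₂)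
    (hpoly : PolyCond ν R₁ c c' β₁ β₂) :
    (∀ κ N T : ℝ, 0 < κ → 0 < N → 0 < T → ∃ C : ℝ, 0 < C ∧
      ∀ t s : ℝ, 0 < t → t ≤ T → 0 < s → s ≤ (φInv (t⁻¹))⁻¹ →
        Real.exp (-(κ * (t * Hfun ν (σ t s)))) ≤ C * (s * φInv (t⁻¹)) ^ N) ∧
    (R₁ = ⊤ → ∀ κ N : ℝ, 0 < κ → 0 < N → ∃ C : ℝ, 0 < C ∧
      ∀ t s : ℝ, 0 < t → 0 < s → s ≤ (φInv (t⁻¹))⁻¹ →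
        Real.exp (-(κ * (t * Hfun ν (σ t s)))) ≤ C * (s * φInv (t⁻¹)) ^ N) := by
  -- common setup
  set M : ℝ := max 2 ((2 / c) ^ (1 / β₁)) with hM_def
  have hM2 : (2:ℝ) ≤ M := le_max_left _ _
  have hMpos : (0:ℝ) < M := by linarith
  have hMc : 2 ≤ c * M ^ β₁ := by
    have h1 : (2 / c) ^ (1 / β₁) ≤ M := le_max_right _ _
    have h2 : ((2 / c) ^ (1 / β₁)) ^ β₁ ≤ M ^ β₁ :=
      Real.rpow_le_rpow (Real.rpow_nonneg (by positivity) _) h1 hβ₁.le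
    have h3 : ((2 / c) ^ (1 / β₁)) ^ β₁ = 2 / c := by
      rw [← Real.rpow_mul (by positivity), one_div_mul_cancel hβ₁.ne', Real.rpow_one]
    rw [h3] at h2
    have h4 := mul_le_mul_of_nonneg_left h2 hc.le
    have h5 : c * (2 / c) = 2 := by field_simp
    rw [h5] at h4
    exact h4
  set δ : ℝ := (2 * Real.exp 1 * M)⁻¹ with hδ_def
  have hδ : 0 < δ := by positivity
  have hkey_of : ∀ lam : ℝ, 0 < lam → ENNReal.ofReal (1/lam) < R₁ →
      δ * laplaceExp ν lam ≤ lam * ∫ y, y * Real.exp (-(lam * y)) ∂ν := by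
    intro lam hlam hR
    have h := key_ineq hν hpoly hc hβ₁ hM2 hMc hlam hR
    have h2 := mul_le_mul_of_nonneg_left h hδ.le
    rw [← mul_assoc, hδ_def, inv_mul_cancel₀ (by positivity), one_mul] at h2
    exact h2
  constructor
  · -- Part 1 : bounded time horizon
    intro κ N T hκ hN hT
    obtain ⟨rstar, hr0, hrlt⟩ : ∃ r : ℝ, 0 < r ∧ ENNReal.ofReal r < R₁ := by
      rcases eq_or_ne R₁ ⊤ with h | h
      · exact ⟨1, one_pos, by rw [h]; exact ENNReal.ofReal_lt_top⟩
      · have h2 : 0 < R₁.toReal := ENNReal.toReal_pos hR₁.ne' h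
        refine ⟨R₁.toReal / 2, by linarith, ?_⟩
        calc ENNReal.ofReal (R₁.toReal / 2) < ENNReal.ofReal R₁.toReal := by
              rw [ENNReal.ofReal_lt_ofReal_iff h2]; linarith
          _ = R₁ := ENNReal.ofReal_toReal h
    set b : ℝ := rstar⁻¹ with hb_def
    have hb : 0 < b := by positivity
    have hkeyb : ∀ lam, b ≤ lam →
        δ * laplaceExp ν lam ≤ lam * ∫ y, y * Real.exp (-(lam * y)) ∂ν := by
      intro lam hlam
      have hlam0 : 0 < lam := lt_of_lt_of_le hb hlam
      apply hkey_of lam hlam0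
      have hle : 1 / lam ≤ rstar := by
        rw [div_le_iff₀ hlam0]
        calc (1:ℝ) = rstar * rstar⁻¹ := by field_simp
          _ ≤ rstar * lam := by apply mul_le_mul_of_nonneg_left hlam hr0.le
      exact lt_of_le_of_lt (ENNReal.ofReal_le_ofReal hle) hrlt
    obtain ⟨hLT, hLTeq⟩ := hφInv T⁻¹ (by positivity)
    set B : ℝ := max 1 (b / φInv T⁻¹) with hB_def
    have hB : (1:ℝ) ≤ B := le_max_left _ _
    obtain ⟨C₆, hC₆, hexp⟩ := exp_rpow_bound hκ hδ hN
    refine ⟨Real.exp (κ * B) * C₆ + (B / δ) ^ N, by positivity, ?_⟩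
    intro t s ht htT hs hsle
    obtain ⟨hL, hLeq⟩ := hφInv t⁻¹ (by positivity)
    have hLTle : φInv T⁻¹ ≤ φInv t⁻¹ := by
      by_contra hcon
      push_neg at hcon
      have h1 : laplaceExp ν (φInv t⁻¹) ≤ laplaceExp ν (φInv T⁻¹) :=
        laplaceExp_mono hν hL hcon.le
      rw [hLeq, hLTeq] at h1
      have h2 : T ≤ t := by
        by_contra h3
        push_neg at h3
        have := inv_strictAnti₀ ht h3
        linarith
      have h4 : t = T := le_antisymm htT h2
      rw [h4] at hcon
      exact lt_irrefl _ hcon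
    refine core_pointwise hν hσ hφInv hκ hN hB hδ hC₆ hexp ht hs hsle
      (le_max_left _ b) ?_ ?_
    · -- max (φInv t⁻¹) b ≤ B * φInv t⁻¹
      apply max_le
      · calc φInv t⁻¹ = 1 * φInv t⁻¹ := (one_mul _).symm
          _ ≤ B * φInv t⁻¹ := by
            apply mul_le_mul_of_nonneg_right (le_max_left 1 _) hL.le
      · calc b = (b / φInv T⁻¹) * φInv T⁻¹ := (div_mul_cancel₀ b hLT.ne').symm
          _ ≤ (b / φInv T⁻¹) * φInv t⁻¹ := by
            apply mul_le_mul_of_nonneg_left hLTle (by positivity)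
          _ ≤ B * φInv t⁻¹ := by
            apply mul_le_mul_of_nonneg_right (le_max_right 1 _) hL.le
    · intro lam hlam
      exact hkeyb lam (le_trans (le_max_right (φInv t⁻¹) b) hlam)
  · -- Part 2 : R₁ = ⊤
    intro htop κ N hκ hN
    obtain ⟨C₆, hC₆, hexp⟩ := exp_rpow_bound hκ hδ hN
    refine ⟨Real.exp (κ * 1) * C₆ + ((1:ℝ) / δ) ^ N, by positivity, ?_⟩
    intro t s ht hs hsle
    obtain ⟨hL, hLeq⟩ := hφInv t⁻¹ (by positivity)
    refine core_pointwise hν hσ hφInv hκ hN (le_refl (1:ℝ)) hδ hC₆ hexp ht hs hsle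
      (le_refl _) (by rw [one_mul]) ?_
    intro lam hlam
    have hlam0 : 0 < lam := lt_of_lt_of_le hL hlam
    apply hkey_of lam hlam0
    rw [htop]
    exact ENNReal.ofReal_lt_top
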